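/- Assume λ⁺_m ≥ n. Then T is a Littlewood–Richardson tableau (i.e. T is semistandard and w(T) is a lattice word) if and only if T⁺ is marked (i.e. T⁺ is semistandard and Rp(T⁺) is anti-semistandard). In other words, T ∈ LR(λ′/μ′, ν) if and only if T⁺ ∈ M((λ⁺)′/μ′, ν/ω). -/

import Mathlib

noncomputable section

/-- A partition, written 1-based: `α i` is the length of row `i` for `i ≥ 1`
(we normalize `α 0 = 0`); it is weakly decreasing and eventually zero. -/
def IsPartition (α : ℕ → ℕ) : Prop :=
  α 0 = 0 ∧ (∀ i j, 1 ≤ i → i ≤ j → α j ≤ α i) ∧ ∃ N, ∀ i, N ≤ i → α i = 0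

/-- The set of cells of the skew diagram `α/β` (rows and columns 1-based):
`(i,j)` with `β i < j ≤ α i`. -/
def cellOf (α β : ℕ → ℕ) : Set (ℕ × ℕ) := {p | β p.1 < p.2 ∧ p.2 ≤ α p.1}

/-- The conjugate partition (1-based): `(conjP α) j = #{i ≥ 1 | α i ≥ j}` for `j ≥ 1`. -/
def conjP (α : ℕ → ℕ) (j : ℕ) : ℕ := Set.ncard {i : ℕ | 1 ≤ i ∧ 1 ≤ j ∧ j ≤ α i}

/-- Semistandard skew tableau: entries weakly increase along rows (left to right) and
strictly increase down columns. -/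
def IsSSkew (α β : ℕ → ℕ) (T : ℕ × ℕ → ℕ) : Prop :=
  (∀ i j j', (i, j) ∈ cellOf α β → (i, j') ∈ cellOf α β → j ≤ j' → T (i, j) ≤ T (i, j')) ∧
  (∀ i i' j, (i, j) ∈ cellOf α β → (i', j) ∈ cellOf α β → i < i' → T (i, j) < T (i', j))

/-- Anti-semistandard skew tableau: entries strictly decrease along rows (left to right)
and weakly decrease down columns. -/
def IsAntiSSkew (α β : ℕ → ℕ) (T : ℕ × ℕ → ℕ) : Prop :=
  (∀ i j j', (i, j) ∈ cellOf α β → (i, j') ∈ cellOf α β → j < j' → T (i, j') < T (i, j)) ∧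
  (∀ i i' j, (i, j) ∈ cellOf α β → (i', j) ∈ cellOf α β → i ≤ i' → T (i', j) ≤ T (i, j))

/-- `wle p q` : cell `p` comes weakly before cell `q` in the reading order of the reading
word (rows top to bottom, inside each row right to left). -/
def wle (p q : ℕ × ℕ) : Prop := p.1 < q.1 ∨ (p.1 = q.1 ∧ q.2 ≤ p.2)

/-- Number of occurrences of the symbol `v` among the cells weakly before `x` in the
reading word of `T` (so "the `j`-th occurrence of `v` in `w(T)` is at the cell `x`" reads
`x ∈ cellOf α β ∧ T x = v ∧ occBefore α β T v x = j`). -/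
def occBefore (α β : ℕ → ℕ) (T : ℕ × ℕ → ℕ) (v : ℕ) (x : ℕ × ℕ) : ℕ :=
  Set.ncard {p | p ∈ cellOf α β ∧ wle p x ∧ T p = v}

/-- Total number of occurrences of the symbol `v` in the skew tableau `T`. -/
def occCount (α β : ℕ → ℕ) (T : ℕ × ℕ → ℕ) (v : ℕ) : ℕ :=
  Set.ncard {p | p ∈ cellOf α β ∧ T p = v}

/-- The reading word of `T` is a lattice word for the symbols `base, base+1, …` :
in every initial segment, `v+1` occurs at most as often as `v`, for every `v ≥ base`. -/
def IsLatticeFrom (α β : ℕ → ℕ) (T : ℕ × ℕ → ℕ) (base : ℕ) : Prop :=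
  ∀ x ∈ cellOf α β, ∀ v, base ≤ v → occBefore α β T (v + 1) x ≤ occBefore α β T v x

/-- `T` (with symbols `m+1, m+2, …`) is shifted Yamanouchi with respect to the shift `ω`:
for every initial segment `w′` of the reading word and every `i ≥ 1`,
`ω i + a_i(w′) ≥ ω (i+1) + a_{i+1}(w′)`. -/
def ShiftedYam (α β : ℕ → ℕ) (m : ℕ) (ω : ℕ → ℕ) (T : ℕ × ℕ → ℕ) : Prop :=
  ∀ x ∈ cellOf α β, ∀ i, 1 ≤ i →
    ω (i + 1) + occBefore α β T (m + i + 1) x ≤ ω i + occBefore α β T (m + i) x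

/-- `Tm = Rp(Tp)` : if the `j`-th occurrence of the symbol `m+i` in the reading word of
`Tp` lies in column `c` of `Tp`, then the entry of `Tm` at the cell `(i, ω i + j)` is `c`. -/
def IsRp (α β : ℕ → ℕ) (m : ℕ) (ω : ℕ → ℕ) (Tp Tm : ℕ × ℕ → ℕ) : Prop :=
  ∀ x ∈ cellOf α β, ∀ i, 1 ≤ i → Tp x = m + i →
    Tm (i, ω i + occBefore α β Tp (m + i) x) = x.2

/-- `λ⁺` : the first `m` rows of `λ`. -/
def lamPlus (m : ℕ) (la : ℕ → ℕ) : ℕ → ℕ := fun i => if i ≤ m then la i else 0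

/-- `λ⁻` : the conjugate of the partition `(λ_{m+1}, λ_{m+2}, …)`. -/
def lamMinus (m : ℕ) (la : ℕ → ℕ) : ℕ → ℕ :=
  conjP (fun i => if 1 ≤ i then la (m + i) else 0)

-- ===================== wle basics =====================

lemma wle_refl (p : ℕ × ℕ) : wle p p := by unfold wle; omega

lemma wle_trans {p q r : ℕ × ℕ} (h1 : wle p q) (h2 : wle q r) : wle p r := by
  unfold wle at *; omega

lemma wle_total (p q : ℕ × ℕ) : wle p q ∨ wle q p := by unfold wle; omega

lemma wle_antisymm {p q : ℕ × ℕ} (h1 : wle p q) (h2 : wle q p) : p = q := by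
  unfold wle at *
  obtain ⟨a, b⟩ := p; obtain ⟨c, d⟩ := q
  simp only [Prod.mk.injEq]
  simp only [Prod.fst, Prod.snd] at h1 h2
  omega

-- ===================== occ API =====================

section Occ

variable {α β : ℕ → ℕ} {T : ℕ × ℕ → ℕ}

def occSet (α β : ℕ → ℕ) (T : ℕ × ℕ → ℕ) (v : ℕ) (x : ℕ × ℕ) : Set (ℕ × ℕ) :=
  {p | p ∈ cellOf α β ∧ wle p x ∧ T p = v}

lemma occBefore_def (v : ℕ) (x : ℕ × ℕ) :
    occBefore α β T v x = (occSet α β T v x).ncard := rfl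

variable (hfin : (cellOf α β).Finite)
include hfin

lemma occSet_finite (v : ℕ) (x : ℕ × ℕ) : (occSet α β T v x).Finite :=
  hfin.subset (fun p hp => hp.1)

lemma occBefore_mono {x y : ℕ × ℕ} (h : wle x y) (v : ℕ) :
    occBefore α β T v x ≤ occBefore α β T v y := by
  rw [occBefore_def, occBefore_def]
  exact Set.ncard_le_ncard (fun p hp => ⟨hp.1, wle_trans hp.2.1 h, hp.2.2⟩)
    (occSet_finite hfin v y)

lemma occBefore_le_count (v : ℕ) (x : ℕ × ℕ) :
    occBefore α β T v x ≤ occCount α β T v := by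
  rw [occBefore_def, occCount]
  exact Set.ncard_le_ncard (fun p hp => ⟨hp.1, hp.2.2⟩)
    (hfin.subset (fun p hp => hp.1))

lemma occBefore_pos {x : ℕ × ℕ} (hx : x ∈ cellOf α β) (hv : T x = v) :
    1 ≤ occBefore α β T v x := by
  rw [occBefore_def]
  have : (occSet α β T v x).Nonempty := ⟨x, hx, wle_refl x, hv⟩
  have := (Set.ncard_pos (occSet_finite hfin v x)).mpr this
  omega

lemma occBefore_lt {x z : ℕ × ℕ} (hz : z ∈ cellOf α β) (hTz : T z = v)
    (hxz : wle x z) (hne : x ≠ z) :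
    occBefore α β T v x < occBefore α β T v z := by
  rw [occBefore_def, occBefore_def]
  apply Set.ncard_lt_ncard _ (occSet_finite hfin v z)
  constructor
  · exact fun p hp => ⟨hp.1, wle_trans hp.2.1 hxz, hp.2.2⟩
  · intro hsub
    have hzin : z ∈ occSet α β T v x := hsub ⟨hz, wle_refl z, hTz⟩
    exact hne (wle_antisymm hxz hzin.2.1)

omit hfin in
lemma exists_wle_max {W : Set (ℕ × ℕ)} (hW : W.Finite) (hne : W.Nonempty) :
    ∃ z ∈ W, ∀ u ∈ W, wle u z := by
  classical
  obtain ⟨B, hB⟩ : ∃ B, ∀ p ∈ W, p.2 < B := by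
    obtain ⟨F, hF⟩ := hW.exists_finset_coe
    refine ⟨(F.image Prod.snd).sup id + 1, fun p hp => ?_⟩
    have : p.2 ≤ (F.image Prod.snd).sup id := by
      apply Finset.le_sup (f := id)
      exact Finset.mem_image_of_mem Prod.snd (by rw [← Finset.mem_coe, hF]; exact hp)
    omega
  set f : ℕ × ℕ → ℕ := fun p => p.1 * B + (B - p.2) with hf
  obtain ⟨F, hF⟩ := hW.exists_finset_coe
  have hneF : F.Nonempty := by
    rw [← Finset.coe_nonempty, hF]; exact hne
  obtain ⟨z, hzF, hzmax⟩ := F.exists_max_image f hneF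
  have hzW : z ∈ W := by rw [← hF]; exact hzF
  refine ⟨z, hzW, fun u hu => ?_⟩
  rcases wle_total u z with h | h
  · exact h
  · -- wle z u ; show wle u z. If u ≠ z then f z < f u contradiction
    by_cases heq : u = z
    · subst heq; exact wle_refl u
    · exfalso
      have hfu : f u ≤ f z := hzmax u (by rw [← Finset.mem_coe, hF]; exact hu)
      have hub : u.2 < B := hB u hu
      have hzb : z.2 < B := hB z hzW
      rcases h with h | h
      · have h1 : z.1 + 1 ≤ u.1 := h
        have : (z.1 + 1) * B ≤ u.1 * B := Nat.mul_le_mul_right B h1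
        have : z.1 * B + B ≤ u.1 * B := by nlinarith
        simp only [hf] at hfu
        omega
      · have h2 : u.2 ≤ z.2 := h.2
        have h3 : u.2 < z.2 := by
          rcases Nat.lt_or_ge u.2 z.2 with h' | h'
          · exact h'
          · exfalso; exact heq (Prod.ext h.1.symm (le_antisymm h2 h'))
        have h4 : u.1 = z.1 := h.1.symm
        simp only [hf, h4] at hfu
        omega

omit hfin in
lemma occBefore_eq_of_max {v : ℕ} {x z : ℕ × ℕ}
    (hz : z ∈ occSet α β T v x) (hmax : ∀ u ∈ occSet α β T v x, wle u z) :
    occBefore α β T v z = occBefore α β T v x := by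
  rw [occBefore_def, occBefore_def]
  congr 1
  apply Set.eq_of_subset_of_subset
  · exact fun p hp => ⟨hp.1, wle_trans hp.2.1 hz.2.1, hp.2.2⟩
  · exact fun p hp => ⟨hp.1, hmax p hp, hp.2.2⟩

/-- k-th occurrence weakly before x exists, for 1 ≤ k ≤ occBefore v x. -/
lemma exists_kth_occ {v : ℕ} :
    ∀ N, ∀ x k, occBefore α β T v x = N → 1 ≤ k → k ≤ N →
      ∃ z, z ∈ cellOf α β ∧ T z = v ∧ wle z x ∧ occBefore α β T v z = k := by
  intro N
  induction N using Nat.strong_induction_on with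
  | _ N IH =>
    intro x k hN hk1 hkN
    have hne : (occSet α β T v x).Nonempty := by
      rw [Set.nonempty_iff_ne_empty]
      intro h
      rw [occBefore_def, h, Set.ncard_empty] at hN
      omega
    obtain ⟨z0, hz0, hz0max⟩ := exists_wle_max (occSet_finite hfin v x) hne
    have hbz0 : occBefore α β T v z0 = N := by
      rw [occBefore_eq_of_max hz0 hz0max, hN]
    by_cases hkeq : k = N
    · exact ⟨z0, hz0.1, hz0.2.2, hz0.2.1, by rw [hbz0, hkeq]⟩
    · have hkN' : k ≤ N - 1 := by omega
      have hNpos : 1 ≤ N := le_trans hk1 hkN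
      -- W' = occSet v z0 \ {z0}
      have hz0self : z0 ∈ occSet α β T v z0 := ⟨hz0.1, wle_refl z0, hz0.2.2⟩
      have hW'ne : (occSet α β T v z0 \ {z0}).Nonempty := by
        rw [Set.nonempty_iff_ne_empty]
        intro h
        have h1 : occSet α β T v z0 ⊆ {z0} := by
          intro u hu
          by_contra hne2
          exact (Set.eq_empty_iff_forall_notMem.mp h u) ⟨hu, hne2⟩
        have : (occSet α β T v z0).ncard ≤ ({z0} : Set (ℕ × ℕ)).ncard :=
          Set.ncard_le_ncard h1 (Set.finite_singleton z0)
        rw [Set.ncard_singleton] at this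
        rw [occBefore_def] at hbz0
        omega
      obtain ⟨z1, hz1, hz1max⟩ := exists_wle_max ((occSet_finite hfin v z0).diff) hW'ne
      have hz1occ : z1 ∈ occSet α β T v z0 := hz1.1
      have hz1ne : z1 ≠ z0 := hz1.2
      have hocc_eq : occSet α β T v z1 = occSet α β T v z0 \ {z0} := by
        apply Set.eq_of_subset_of_subset
        · intro u hu
          refine ⟨⟨hu.1, wle_trans hu.2.1 hz1occ.2.1, hu.2.2⟩, ?_⟩
          intro huz0
          simp only [Set.mem_singleton_iff] at huz0
          subst huz0
          exact hz1ne (wle_antisymm hz1occ.2.1 hu.2.1)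
        · intro u hu
          exact ⟨hu.1.1, hz1max u hu, hu.1.2.2⟩
      have hbz1 : occBefore α β T v z1 = N - 1 := by
        rw [occBefore_def, hocc_eq, Set.ncard_diff_singleton_of_mem hz0self]
        rw [occBefore_def] at hbz0; rw [hbz0]
      obtain ⟨z, hz⟩ := IH (N - 1) (by omega) z1 k hbz1 hk1 hkN'
      exact ⟨z, hz.1, hz.2.1, wle_trans (wle_trans hz.2.2.1 hz1occ.2.1) hz0.2.1, hz.2.2.2⟩

lemma occ_unique {v : ℕ} {z1 z2 : ℕ × ℕ}
    (h1 : z1 ∈ cellOf α β) (hT1 : T z1 = v) (h2 : z2 ∈ cellOf α β) (hT2 : T z2 = v)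
    (hb : occBefore α β T v z1 = occBefore α β T v z2) : z1 = z2 := by
  rcases wle_total z1 z2 with h | h
  · by_contra hne
    have := occBefore_lt hfin h2 hT2 h hne
    omega
  · by_contra hne
    have := occBefore_lt hfin h1 hT1 h (fun he => hne he.symm)
    omega

/-- global k-th occurrence exists for 1 ≤ k ≤ occCount. -/
lemma exists_global_kth {v k : ℕ} (hk1 : 1 ≤ k) (hk2 : k ≤ occCount α β T v) :
    ∃ z, z ∈ cellOf α β ∧ T z = v ∧ occBefore α β T v z = k := by
  have hne : ({p | p ∈ cellOf α β ∧ T p = v} : Set (ℕ × ℕ)).Nonempty := by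
    rw [Set.nonempty_iff_ne_empty]
    intro h
    rw [occCount, h, Set.ncard_empty] at hk2
    omega
  obtain ⟨z0, hz0, hz0max⟩ := exists_wle_max (hfin.subset (fun p hp => hp.1)) hne
  have hocc : occSet α β T v z0 = {p | p ∈ cellOf α β ∧ T p = v} := by
    apply Set.eq_of_subset_of_subset
    · exact fun p hp => ⟨hp.1, hp.2.2⟩
    · exact fun p hp => ⟨hp.1, hz0max p hp, hp.2⟩
  have hb : occBefore α β T v z0 = occCount α β T v := by
    rw [occBefore_def, hocc, occCount]
  obtain ⟨z, hz⟩ := exists_kth_occ hfin (occCount α β T v) z0 k hb hk1 hk2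
  exact ⟨z, hz.1, hz.2.1, hz.2.2.2⟩

end Occ
-- ===================== shape / SSYT lemmas =====================

section Shape

variable {α β : ℕ → ℕ} {T : ℕ × ℕ → ℕ}

lemma cell_row_pos (hα0 : α 0 = 0) {p : ℕ × ℕ} (hp : p ∈ cellOf α β) : 1 ≤ p.1 := by
  by_contra h
  have : p.1 = 0 := by omega
  have h1 := hp.1; have h2 := hp.2
  rw [this, hα0] at h2
  omega

lemma cell_col_pos {p : ℕ × ℕ} (hp : p ∈ cellOf α β) : 1 ≤ p.2 := by
  have := hp.1; omega

/-- the "northeast corner" cell: given p lower-left-ish and q, with p.1 ≤ q.1, p.2 ≤ q.2,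
the cell (p.1, q.2) is in the diagram. -/
lemma cell_corner (hα0 : α 0 = 0) (hα : ∀ i j, 1 ≤ i → i ≤ j → α j ≤ α i)
    {p q : ℕ × ℕ} (hp : p ∈ cellOf α β) (hq : q ∈ cellOf α β)
    (h1 : p.1 ≤ q.1) (h2 : p.2 ≤ q.2) : (p.1, q.2) ∈ cellOf α β := by
  constructor
  · have := hp.1; simp only [Prod.fst, Prod.snd]; omega
  · have h3 : α q.1 ≤ α p.1 := hα p.1 q.1 (cell_row_pos hα0 hp) h1
    have := hq.2; simp only [Prod.fst, Prod.snd]; omega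

/-- columns of equal entries strictly decrease along reading order -/
lemma col_strict_occ (hα0 : α 0 = 0) (hα : ∀ i j, 1 ≤ i → i ≤ j → α j ≤ α i)
    (hS : IsSSkew α β T) {v : ℕ} {z1 z2 : ℕ × ℕ}
    (h1 : z1 ∈ cellOf α β) (hT1 : T z1 = v) (h2 : z2 ∈ cellOf α β) (hT2 : T z2 = v)
    (h12 : wle z1 z2) (hne : z1 ≠ z2) : z2.2 < z1.2 := by
  rcases h12 with h | h
  · -- z1.1 < z2.1
    by_contra hcol
    push_neg at hcol  -- z1.2 ≤ z2.2
    have hc : (z1.1, z2.2) ∈ cellOf α β := cell_corner hα0 hα h1 h2 (le_of_lt h) hcol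
    have hge : T (z1.1, z1.2) ≤ T (z1.1, z2.2) := hS.1 z1.1 z1.2 z2.2 (by simpa using h1) hc hcol
    have hlt : T (z1.1, z2.2) < T (z2.1, z2.2) := hS.2 z1.1 z2.1 z2.2 hc (by simpa using h2) h
    simp only [Prod.mk.eta] at hge hlt
    rw [hT1, hT2] at *
    omega
  · -- same row
    have : z2.2 ≤ z1.2 := h.2
    rcases Nat.lt_or_ge z2.2 z1.2 with h' | h'
    · exact h'
    · exact absurd (Prod.ext h.1 (by omega)) hne

end Shape

-- ===================== conjP lemmas =====================

section Conj

lemma conjP_set_finite {α : ℕ → ℕ} (hα : IsPartition α) (j : ℕ) :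
    ({i : ℕ | 1 ≤ i ∧ 1 ≤ j ∧ j ≤ α i}).Finite := by
  obtain ⟨N, hN⟩ := hα.2.2
  apply Set.Finite.subset (Set.finite_Icc 1 N)
  intro i hi
  obtain ⟨h1, h2, h3⟩ := hi
  simp only [Set.mem_Icc]
  refine ⟨h1, ?_⟩
  by_contra h
  have : α i = 0 := hN i (by omega)
  omega

lemma ncard_Icc_one (k : ℕ) : (Set.Icc 1 k).ncard = k := by
  rw [← Finset.coe_Icc, Set.ncard_coe_finset, Nat.card_Icc]
  omega

lemma conjP_ge_iff {α : ℕ → ℕ} (hα : IsPartition α) {i j : ℕ} (hi : 1 ≤ i) (hj : 1 ≤ j) :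
    i ≤ conjP α j ↔ j ≤ α i := by
  have hfin := conjP_set_finite hα j
  have hdcl : ∀ i' i'', 1 ≤ i' → i' ≤ i'' → i'' ∈ {i : ℕ | 1 ≤ i ∧ 1 ≤ j ∧ j ≤ α i} →
      i' ∈ {i : ℕ | 1 ≤ i ∧ 1 ≤ j ∧ j ≤ α i} := by
    intro i' i'' h1 h2 h3
    obtain ⟨ha, hb, hc⟩ := h3
    exact ⟨h1, hb, le_trans hc (hα.2.1 i' i'' h1 h2)⟩
  constructor
  · intro h
    unfold conjP at h
    by_contra hc
    have hnotin : i ∉ {i : ℕ | 1 ≤ i ∧ 1 ≤ j ∧ j ≤ α i} := by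
      intro hin; exact hc hin.2.2
    have hsub : {i : ℕ | 1 ≤ i ∧ 1 ≤ j ∧ j ≤ α i} ⊆ Set.Icc 1 (i - 1) := by
      intro u hu
      have hu1 : 1 ≤ u := hu.1
      simp only [Set.mem_Icc]
      refine ⟨hu1, ?_⟩
      by_contra h2
      exact hnotin (hdcl i u hi (by omega) hu)
    have := Set.ncard_le_ncard hsub (Set.finite_Icc 1 (i-1))
    rw [ncard_Icc_one] at this
    omega
  · intro h
    have hsub : Set.Icc 1 i ⊆ {i : ℕ | 1 ≤ i ∧ 1 ≤ j ∧ j ≤ α i} := by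
      intro u hu
      simp only [Set.mem_Icc] at hu
      exact hdcl u i hu.1 hu.2 ⟨hi, hj, h⟩
    have := Set.ncard_le_ncard hsub hfin
    rw [ncard_Icc_one] at this
    exact this

lemma conjP_zero (α : ℕ → ℕ) : conjP α 0 = 0 := by
  unfold conjP
  convert Set.ncard_empty ℕ
  rw [Set.eq_empty_iff_forall_notMem]
  intro i hi
  obtain ⟨h1, h2, h3⟩ := hi
  omega

lemma conjP_antitone {α : ℕ → ℕ} (hα : IsPartition α) {j j' : ℕ} (hj : 1 ≤ j) (h : j ≤ j') :
    conjP α j' ≤ conjP α j := by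
  apply Set.ncard_le_ncard _ (conjP_set_finite hα j)
  intro i hi
  obtain ⟨h1, h2, h3⟩ := hi
  exact ⟨h1, hj, le_trans h h3⟩

lemma conjP_le_of_bounded {α : ℕ → ℕ} {m j : ℕ} (hb : ∀ k, m < k → α k = 0) (hj : 1 ≤ j) :
    conjP α j ≤ m := by
  unfold conjP
  have hsub : {i : ℕ | 1 ≤ i ∧ 1 ≤ j ∧ j ≤ α i} ⊆ Set.Icc 1 m := by
    intro i hi
    obtain ⟨h1, h2, h3⟩ := hi
    simp only [Set.mem_Icc]
    refine ⟨h1, ?_⟩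
    by_contra h
    have := hb i (by omega)
    omega
  have := Set.ncard_le_ncard hsub (Set.finite_Icc 1 m)
  rw [ncard_Icc_one] at this
  exact this

lemma nat_eq_of_forall_le_iff {a b : ℕ} (h : ∀ i, 1 ≤ i → (i ≤ a ↔ i ≤ b)) : a = b := by
  rcases Nat.eq_zero_or_pos a with h0 | h0
  · rcases Nat.eq_zero_or_pos b with h1 | h1
    · omega
    · have := (h b h1).mpr le_rfl; omega
  · have := (h a h0).mp le_rfl
    rcases Nat.eq_zero_or_pos b with h1 | h1
    · omega
    · have := (h b h1).mpr le_rfl; omega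

end Conj
-- ===================== specialized partition lemmas =====================

section Lam

variable {m n : ℕ} {la μ : ℕ → ℕ}

lemma isPartition_lamPlus (hla : IsPartition la) : IsPartition (lamPlus m la) := by
  obtain ⟨h0, hmono, N, hN⟩ := hla
  refine ⟨?_, ?_, N, ?_⟩
  · unfold lamPlus
    by_cases h : 0 ≤ m <;> simp [h0]
  · intro i j hi hij
    unfold lamPlus
    by_cases hj : j ≤ m
    · have hi' : i ≤ m := le_trans hij hj
      simp [hj, hi']
      exact hmono i j hi hij
    · simp [hj]
  · intro i hi
    unfold lamPlus
    by_cases h : i ≤ m <;> simp [h]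
    exact hN i hi

lemma isPartition_tail (hla : IsPartition la) :
    IsPartition (fun i => if 1 ≤ i then la (m + i) else 0) := by
  obtain ⟨h0, hmono, N, hN⟩ := hla
  refine ⟨by simp, ?_, N, ?_⟩
  · intro i j hi hij
    simp only [hi, le_trans hi hij, if_pos]
    exact hmono (m + i) (m + j) (by omega) (by omega)
  · intro i hi
    by_cases h : 1 ≤ i <;> simp [h]
    exact hN (m + i) (by omega)

lemma conjP_lamPlus_eq (hla : IsPartition la) {j : ℕ} (hj : 1 ≤ j) :
    conjP (lamPlus m la) j = min (conjP la j) m := by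
  apply nat_eq_of_forall_le_iff
  intro i hi
  rw [conjP_ge_iff (isPartition_lamPlus hla) hi hj]
  unfold lamPlus
  by_cases h : i ≤ m
  · rw [if_pos h, ← conjP_ge_iff hla hi hj]
    omega
  · rw [if_neg h]
    omega

lemma lamMinus_eq (hla : IsPartition la) {j : ℕ} (hj : 1 ≤ j) :
    lamMinus m la j = conjP la j - m := by
  apply nat_eq_of_forall_le_iff
  intro i hi
  unfold lamMinus
  rw [conjP_ge_iff (isPartition_tail hla) hi hj]
  simp only [hi, if_pos]
  rw [← conjP_ge_iff hla (show 1 ≤ m + i by omega) hj]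
  omega

lemma lamMinus_zero (la : ℕ → ℕ) (m : ℕ) : lamMinus m la 0 = 0 := conjP_zero _

lemma lamMinus_antitone (hla : IsPartition la) {j j' : ℕ} (hj : 1 ≤ j) (h : j ≤ j') :
    lamMinus m la j' ≤ lamMinus m la j := by
  rcases Nat.eq_zero_or_pos j' with h0 | h0
  · omega
  rw [lamMinus_eq hla hj, lamMinus_eq hla h0]
  have := conjP_antitone hla hj h
  omega

end Lam

-- ===================== our shapes =====================

section Shapes

variable {m n : ℕ} {la μ : ℕ → ℕ}

lemma mu_zero_of_gt (hμl : ∀ i, μ i ≤ lamPlus m la i) : ∀ k, m < k → μ k = 0 := by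
  intro k hk
  have := hμl k
  unfold lamPlus at this
  rw [if_neg (by omega)] at this
  omega

lemma beta_le_m (hμl : ∀ i, μ i ≤ lamPlus m la i) {i : ℕ} (hi : 1 ≤ i) :
    conjP μ i ≤ m :=
  conjP_le_of_bounded (mu_zero_of_gt hμl) hi

lemma cellB_fin (hla : IsPartition la) :
    (cellOf (conjP la) (conjP μ)).Finite := by
  apply Set.Finite.subset ((Set.finite_Icc 1 (la 1)).prod (Set.finite_Icc 1 (conjP la 1)))
  intro p hp
  have hr : 1 ≤ p.1 := cell_row_pos (conjP_zero la) hp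
  have hc : 1 ≤ p.2 := cell_col_pos hp
  have h2 : p.2 ≤ conjP la p.1 := hp.2
  have h3 : conjP la p.1 ≤ conjP la 1 := conjP_antitone hla le_rfl hr
  have h4 : p.1 ≤ la 1 := by
    rw [← conjP_ge_iff hla (le_refl 1) hr]
    omega
  exact ⟨Set.mem_Icc.mpr ⟨hr, h4⟩, Set.mem_Icc.mpr ⟨hc, by omega⟩⟩

lemma cellP_eq (hla : IsPartition la) :
    cellOf (conjP (lamPlus m la)) (conjP μ)
      = {p | p ∈ cellOf (conjP la) (conjP μ) ∧ p.2 ≤ m} := by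
  ext p
  simp only [cellOf, Set.mem_setOf_eq]
  rcases Nat.eq_zero_or_pos p.1 with h0 | h0
  · rw [h0]
    simp only [conjP_zero]
    omega
  · rw [conjP_lamPlus_eq hla h0]
    omega

lemma cellP_fin (hla : IsPartition la) :
    (cellOf (conjP (lamPlus m la)) (conjP μ)).Finite := by
  rw [cellP_eq hla]
  exact (cellB_fin hla).subset (fun p hp => hp.1)

lemma cellP_sub (hla : IsPartition la) :
    cellOf (conjP (lamPlus m la)) (conjP μ) ⊆ cellOf (conjP la) (conjP μ) := by
  rw [cellP_eq hla]
  exact fun p hp => hp.1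

/-- cells directly below a plus cell, down to row `la c`, are plus cells -/
lemma cell_below (hla : IsPartition la) (hμ : IsPartition μ)
    {r c r' : ℕ} (hp : (r, c) ∈ cellOf (conjP (lamPlus m la)) (conjP μ))
    (hr : r ≤ r') (hr' : r' ≤ la c) : (r', c) ∈ cellOf (conjP (lamPlus m la)) (conjP μ) := by
  rw [cellP_eq hla] at hp ⊢
  obtain ⟨⟨hp1', hp2'⟩, hp3'⟩ := hp
  have hp1 : conjP μ r < c := hp1'
  have hp2 : c ≤ conjP la r := hp2'
  have hp3 : c ≤ m := hp3'
  have hr1 : 1 ≤ r := by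
    rcases Nat.eq_zero_or_pos r with h0 | h0
    · rw [h0, conjP_zero] at hp1; rw [h0] at hp2
      have hc1 : 1 ≤ c := by omega
      exfalso
      rw [conjP_zero] at hp2
      omega
    · exact h0
  have hc1 : 1 ≤ c := by omega
  have hb : conjP μ r' ≤ conjP μ r := conjP_antitone hμ hr1 hr
  have ha : c ≤ conjP la r' := by
    rw [conjP_ge_iff hla hc1 (by omega)]
    exact hr'
  have hp3' : c ≤ m := hp3
  exact ⟨⟨show conjP μ r' < c by omega, ha⟩, show c ≤ m from hp3'⟩

/-- RowBound: entries of a semistandard plus tableau are ≤ m + row. -/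
lemma rowBound {T : ℕ × ℕ → ℕ} (hla : IsPartition la) (hμ : IsPartition μ)
    (hm : 1 ≤ m) (hlam : n ≤ la m)
    (hrange : ∀ p ∈ cellOf (conjP la) (conjP μ), m + 1 ≤ T p ∧ T p ≤ m + n)
    (hS : IsSSkew (conjP (lamPlus m la)) (conjP μ) T) :
    ∀ p ∈ cellOf (conjP (lamPlus m la)) (conjP μ), T p ≤ m + p.1 := by
  intro p hp
  obtain ⟨r, c⟩ := p
  simp only [Prod.fst]
  have hrfacts := hp
  rw [cellP_eq hla] at hrfacts
  obtain ⟨⟨hp1', hp2'⟩, hp3'⟩ := hrfacts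
  have hp1 : conjP μ r < c := hp1'
  have hp2 : c ≤ conjP la r := hp2'
  have hp3 : c ≤ m := hp3'
  have hr1 : 1 ≤ r := cell_row_pos (conjP_zero (lamPlus m la)) hp
  have hc1 : 1 ≤ c := by omega
  have hrla : r ≤ la c := by
    rw [← conjP_ge_iff hla hc1 hr1]
    exact hp2
  -- chain down the column
  have chain : ∀ s, r + s ≤ la c → T (r, c) + s ≤ T (r + s, c) := by
    intro s
    induction s with
    | zero => intro _; simp
    | succ s ih =>
      intro hs
      have h1 := ih (by omega)
      have hcell1 : (r + s, c) ∈ cellOf (conjP (lamPlus m la)) (conjP μ) :=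
        cell_below hla hμ hp (by omega) (by omega)
      have hcell2 : (r + s + 1, c) ∈ cellOf (conjP (lamPlus m la)) (conjP μ) :=
        cell_below hla hμ hp (by omega) (by omega)
      have h2 := hS.2 (r + s) (r + s + 1) c hcell1 hcell2 (by omega)
      show T (r, c) + (s + 1) ≤ T (r + s + 1, c)
      omega
  have hcell : (la c, c) ∈ cellOf (conjP (lamPlus m la)) (conjP μ) :=
    cell_below hla hμ hp hrla le_rfl
  have hlac2 : r + (la c - r) = la c := by omega
  have hlast := chain (la c - r) (by omega)
  rw [hlac2] at hlast
  have hub : T (la c, c) ≤ m + n := (hrange _ (cellP_sub hla hcell)).2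
  have hlac : n ≤ la c := le_trans hlam (hla.2.1 c m hc1 hp3)
  omega

end Shapes
-- ===================== counting decompositions =====================

section Decomp

variable {m n : ℕ} {la μ : ℕ → ℕ} {T : ℕ × ℕ → ℕ}

lemma ncard_Ioc_nat (a b : ℕ) : (Set.Ioc a b).ncard = b - a := by
  rw [← Finset.coe_Ioc, Set.ncard_coe_finset, Nat.card_Ioc]

lemma ncard_rowseg (i a b : ℕ) :
    Set.ncard {p : ℕ × ℕ | p.1 = i ∧ a < p.2 ∧ p.2 ≤ b} = b - a := by
  have himg : {p : ℕ × ℕ | p.1 = i ∧ a < p.2 ∧ p.2 ≤ b}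
      = (fun c => (i, c)) '' Set.Ioc a b := by
    ext ⟨p1, p2⟩
    simp only [Set.mem_image, Set.mem_Ioc, Set.mem_setOf_eq, Prod.mk.injEq]
    constructor
    · rintro ⟨h1, h2, h3⟩
      exact ⟨p2, ⟨h2, h3⟩, h1.symm, rfl⟩
    · rintro ⟨c, hc, h1, h2⟩
      subst h1; subst h2
      exact ⟨rfl, hc.1, hc.2⟩
  rw [himg, Set.ncard_image_of_injective _ (fun c d h => by simpa using congrArg Prod.snd h),
    ncard_Ioc_nat]

/-- split of `occBefore` over the big shape at a plus cell -/
lemma occB_split (hla : IsPartition la) (hμl : ∀ i, μ i ≤ lamPlus m la i)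
    (hcanon : ∀ p ∈ cellOf (conjP la) (conjP μ), m < p.2 → T p = m + p.1)
    {i : ℕ} (hi : 1 ≤ i) {x : ℕ × ℕ} (hx : x ∈ cellOf (conjP (lamPlus m la)) (conjP μ)) :
    occBefore (conjP la) (conjP μ) T (m + i) x
      = occBefore (conjP (lamPlus m la)) (conjP μ) T (m + i) x
        + (if i ≤ x.1 then lamMinus m la i else 0) := by
  have hx' := hx
  rw [cellP_eq hla] at hx'
  obtain ⟨hxB, hxm⟩ := hx'
  have hQ : {p | p ∈ occSet (conjP la) (conjP μ) T (m + i) x ∧ p.2 ≤ m}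
      = occSet (conjP (lamPlus m la)) (conjP μ) T (m + i) x := by
    ext p
    simp only [Set.mem_setOf_eq, occSet, cellP_eq hla]
    tauto
  have hC : {p | p ∈ occSet (conjP la) (conjP μ) T (m + i) x ∧ m < p.2}
      = (if i ≤ x.1 then {p : ℕ × ℕ | p.1 = i ∧ m < p.2 ∧ p.2 ≤ conjP la i} else ∅) := by
    ext p
    constructor
    · rintro ⟨⟨hpB, hwle, hTv⟩, hpm⟩
      have hcan := hcanon p hpB hpm
      have hp1 : p.1 = i := by omega
      have hle : p.1 ≤ x.1 := by
        rcases hwle with h | h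
        · omega
        · omega
      rw [if_pos (by omega)]
      exact ⟨hp1, hpm, by rw [← hp1]; exact hpB.2⟩
    · intro hp
      by_cases hix : i ≤ x.1
      · rw [if_pos hix] at hp
        obtain ⟨hp1, hp2, hp3⟩ := hp
        have hpB : p ∈ cellOf (conjP la) (conjP μ) := by
          refine ⟨?_, by rw [hp1]; exact hp3⟩
          have := beta_le_m (la := la) hμl (show 1 ≤ p.1 by omega)
          omega
        have hwle : wle p x := by
          rcases Nat.lt_or_ge p.1 x.1 with h | h
          · exact Or.inl h
          · exact Or.inr ⟨by omega, by omega⟩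
        exact ⟨⟨hpB, hwle, by rw [hcanon p hpB hp2, hp1]⟩, hp2⟩
      · rw [if_neg hix] at hp
        exact absurd hp (Set.notMem_empty p)
  have hunion : occSet (conjP la) (conjP μ) T (m + i) x
      = {p | p ∈ occSet (conjP la) (conjP μ) T (m + i) x ∧ p.2 ≤ m}
        ∪ {p | p ∈ occSet (conjP la) (conjP μ) T (m + i) x ∧ m < p.2} := by
    ext p
    simp only [Set.mem_union, Set.mem_setOf_eq]
    rcases le_or_gt p.2 m with h | h
    · tauto
    · tauto
  have hfinB := cellB_fin (μ := μ) hla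
  have hdisj : Disjoint {p | p ∈ occSet (conjP la) (conjP μ) T (m + i) x ∧ p.2 ≤ m}
      {p | p ∈ occSet (conjP la) (conjP μ) T (m + i) x ∧ m < p.2} := by
    rw [Set.disjoint_left]
    intro p hp1 hp2
    have h1 := hp1.2
    have h2 := hp2.2
    omega
  rw [occBefore_def, hunion, Set.ncard_union_eq hdisj
    ((occSet_finite hfinB _ _).subset (fun p hp => hp.1))
    ((occSet_finite hfinB _ _).subset (fun p hp => hp.1))]
  rw [hQ, hC, ← occBefore_def]
  congr 1
  by_cases hix : i ≤ x.1
  · rw [if_pos hix, if_pos hix, ncard_rowseg, lamMinus_eq hla hi]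
  · rw [if_neg hix, if_neg hix, Set.ncard_empty]

/-- count of plus occurrences of `v` in rows `≤ r` -/
def Fcnt (α β : ℕ → ℕ) (T : ℕ × ℕ → ℕ) (r v : ℕ) : ℕ :=
  Set.ncard {p | p ∈ cellOf α β ∧ p.1 ≤ r ∧ T p = v}

/-- split of `occBefore` over the big shape at a canonical cell -/
lemma occB_canon (hla : IsPartition la) (hμl : ∀ i, μ i ≤ lamPlus m la i)
    (hcanon : ∀ p ∈ cellOf (conjP la) (conjP μ), m < p.2 → T p = m + p.1)
    {i : ℕ} (hi : 1 ≤ i) {x : ℕ × ℕ} (hx : x ∈ cellOf (conjP la) (conjP μ)) (hxm : m < x.2) :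
    occBefore (conjP la) (conjP μ) T (m + i) x
      = Fcnt (conjP (lamPlus m la)) (conjP μ) T (x.1 - 1) (m + i)
        + (if i < x.1 then lamMinus m la i
           else if i = x.1 then conjP la x.1 + 1 - x.2 else 0) := by
  have hx1 : 1 ≤ x.1 := cell_row_pos (conjP_zero la) hx
  have hQ : {p | p ∈ occSet (conjP la) (conjP μ) T (m + i) x ∧ p.2 ≤ m}
      = {p | p ∈ cellOf (conjP (lamPlus m la)) (conjP μ) ∧ p.1 ≤ x.1 - 1 ∧ T p = m + i} := by
    ext p
    simp only [Set.mem_setOf_eq, occSet, cellP_eq hla]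
    constructor
    · rintro ⟨⟨hpB, hwle, hTv⟩, hpm⟩
      refine ⟨⟨hpB, hpm⟩, ?_, hTv⟩
      rcases hwle with h | h
      · omega
      · omega
    · rintro ⟨⟨hpB, hpm⟩, hple, hTv⟩
      exact ⟨⟨hpB, Or.inl (by omega), hTv⟩, hpm⟩
  have hC : {p | p ∈ occSet (conjP la) (conjP μ) T (m + i) x ∧ m < p.2}
      = (if i < x.1 then {p : ℕ × ℕ | p.1 = i ∧ m < p.2 ∧ p.2 ≤ conjP la i}
         else if i = x.1 then {p : ℕ × ℕ | p.1 = i ∧ x.2 - 1 < p.2 ∧ p.2 ≤ conjP la i}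
         else ∅) := by
    ext p
    constructor
    · rintro ⟨⟨hpB, hwle, hTv⟩, hpm⟩
      have hcan := hcanon p hpB hpm
      have hp1 : p.1 = i := by omega
      have hp3 : p.2 ≤ conjP la i := by rw [← hp1]; exact hpB.2
      rcases hwle with h | h
      · rw [if_pos (by omega)]
        exact ⟨hp1, hpm, hp3⟩
      · rw [if_neg (by omega), if_pos (by omega)]
        exact ⟨hp1, by omega, hp3⟩
    · intro hp
      by_cases h1 : i < x.1
      · rw [if_pos h1] at hp
        obtain ⟨hp1, hp2, hp3⟩ := hp
        have hpB : p ∈ cellOf (conjP la) (conjP μ) := by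
          refine ⟨?_, by rw [hp1]; exact hp3⟩
          have := beta_le_m (la := la) hμl (show 1 ≤ p.1 by omega)
          omega
        exact ⟨⟨hpB, Or.inl (by omega), by rw [hcanon p hpB hp2, hp1]⟩, hp2⟩
      · by_cases h2 : i = x.1
        · rw [if_neg h1, if_pos h2] at hp
          obtain ⟨hp1, hp2, hp3⟩ := hp
          have hpm : m < p.2 := by omega
          have hpB : p ∈ cellOf (conjP la) (conjP μ) := by
            refine ⟨?_, by rw [hp1]; exact hp3⟩
            have := beta_le_m (la := la) hμl (show 1 ≤ p.1 by omega)
            omega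
          exact ⟨⟨hpB, Or.inr ⟨by omega, by omega⟩, by rw [hcanon p hpB hpm, hp1]⟩, hpm⟩
        · rw [if_neg h1, if_neg h2] at hp
          exact absurd hp (Set.notMem_empty p)
  have hunion : occSet (conjP la) (conjP μ) T (m + i) x
      = {p | p ∈ occSet (conjP la) (conjP μ) T (m + i) x ∧ p.2 ≤ m}
        ∪ {p | p ∈ occSet (conjP la) (conjP μ) T (m + i) x ∧ m < p.2} := by
    ext p
    simp only [Set.mem_union, Set.mem_setOf_eq]
    rcases le_or_gt p.2 m with h | h
    · tauto
    · tauto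
  have hfinB := cellB_fin (μ := μ) hla
  have hdisj : Disjoint {p | p ∈ occSet (conjP la) (conjP μ) T (m + i) x ∧ p.2 ≤ m}
      {p | p ∈ occSet (conjP la) (conjP μ) T (m + i) x ∧ m < p.2} := by
    rw [Set.disjoint_left]
    intro p hp1 hp2
    have h1 := hp1.2
    have h2 := hp2.2
    omega
  rw [occBefore_def, hunion, Set.ncard_union_eq hdisj
    ((occSet_finite hfinB _ _).subset (fun p hp => hp.1))
    ((occSet_finite hfinB _ _).subset (fun p hp => hp.1))]
  rw [hQ, hC]
  rw [show Fcnt (conjP (lamPlus m la)) (conjP μ) T (x.1 - 1) (m + i)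
    = Set.ncard {p | p ∈ cellOf (conjP (lamPlus m la)) (conjP μ) ∧ p.1 ≤ x.1 - 1
        ∧ T p = m + i} from rfl]
  congr 1
  by_cases h1 : i < x.1
  · rw [if_pos h1, if_pos h1, ncard_rowseg, lamMinus_eq hla hi]
  · by_cases h2 : i = x.1
    · rw [if_neg h1, if_neg h1, if_pos h2, if_pos h2, ncard_rowseg]
      rw [h2]
      omega
    · rw [if_neg h1, if_neg h1, if_neg h2, if_neg h2, Set.ncard_empty]

end Decomp
-- ===================== claim X and column dominance =====================

section ClaimX

variable {α β : ℕ → ℕ} {T : ℕ × ℕ → ℕ} {v : ℕ}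

def gSet (α β : ℕ → ℕ) (T : ℕ × ℕ → ℕ) (v C : ℕ) : Set (ℕ × ℕ) :=
  {p | p ∈ cellOf α β ∧ T p = v ∧ C ≤ p.2}

variable (hfin : (cellOf α β).Finite)
include hfin

lemma col_le_of_b_le (hα0 : α 0 = 0) (hα : ∀ i j, 1 ≤ i → i ≤ j → α j ≤ α i)
    (hS : IsSSkew α β T) {z1 z2 : ℕ × ℕ}
    (h1 : z1 ∈ cellOf α β) (hT1 : T z1 = v) (h2 : z2 ∈ cellOf α β) (hT2 : T z2 = v)
    (hb : occBefore α β T v z1 ≤ occBefore α β T v z2) : z2.2 ≤ z1.2 := by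
  by_cases heq : z1 = z2
  · rw [heq]
  · have hwle : wle z1 z2 := by
      rcases wle_total z1 z2 with h | h
      · exact h
      · exfalso
        have := occBefore_lt hfin h1 hT1 h (fun he => heq he.symm)
        omega
    exact le_of_lt (col_strict_occ hα0 hα hS h1 hT1 h2 hT2 hwle heq)

lemma le_ncard_of_exists_kth {W : Set (ℕ × ℕ)} {k : ℕ} (hfinW : W.Finite)
    (h : ∀ j, 1 ≤ j → j ≤ k → ∃ z, z ∈ W ∧ z ∈ cellOf α β ∧ T z = v
      ∧ occBefore α β T v z = j) :
    k ≤ W.ncard := by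
  classical
  have : (Set.Icc 1 k).ncard ≤ W.ncard := by
    refine Set.ncard_le_ncard_of_injOn
      (fun j => if hj : 1 ≤ j ∧ j ≤ k then (h j hj.1 hj.2).choose else (0, 0)) ?_ ?_ hfinW
    · intro j hj
      simp only [Set.mem_Icc] at hj
      rw [dif_pos hj]
      exact (h j hj.1 hj.2).choose_spec.1
    · intro j1 hj1 j2 hj2 heq
      simp only [Set.mem_Icc] at hj1 hj2
      dsimp only at heq
      rw [dif_pos hj1, dif_pos hj2] at heq
      have e1 := (h j1 hj1.1 hj1.2).choose_spec.2.2.2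
      have e2 := (h j2 hj2.1 hj2.2).choose_spec.2.2.2
      rw [heq] at e1
      omega
  rw [ncard_Icc_one] at this
  exact this

lemma ncard_le_of_b_between {W : Set (ℕ × ℕ)} {K : ℕ}
    (hW : ∀ p ∈ W, p ∈ cellOf α β ∧ T p = v ∧ 1 ≤ occBefore α β T v p
      ∧ occBefore α β T v p ≤ K) :
    W.ncard ≤ K := by
  have : W.ncard ≤ (Set.Icc 1 K).ncard := by
    refine Set.ncard_le_ncard_of_injOn (fun p => occBefore α β T v p) ?_ ?_
      (Set.finite_Icc 1 K)
    · intro p hp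
      obtain ⟨_, _, h1, h2⟩ := hW p hp
      exact Set.mem_Icc.mpr ⟨h1, h2⟩
    · intro p1 hp1 p2 hp2 heq
      obtain ⟨c1, t1, _, _⟩ := hW p1 hp1
      obtain ⟨c2, t2, _, _⟩ := hW p2 hp2
      exact occ_unique hfin c1 t1 c2 t2 heq
  rw [ncard_Icc_one] at this
  exact this

variable (hα0 : α 0 = 0) (hα : ∀ i j, 1 ≤ i → i ≤ j → α j ≤ α i)
  (hS : IsSSkew α β T)
  (hlat : ∀ z ∈ cellOf α β, T z = v + 1 →
    occBefore α β T (v + 1) z ≤ occBefore α β T v z)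
include hα0 hα hS hlat

/-- key claim: the k-th occurrence of v+1 is strictly below and weakly left
of the k-th occurrence of v. -/
lemma claimX : ∀ k z, z ∈ cellOf α β → T z = v + 1 → occBefore α β T (v + 1) z = k →
    ∃ z', z' ∈ cellOf α β ∧ T z' = v ∧ occBefore α β T v z' = k
      ∧ z'.1 < z.1 ∧ z.2 ≤ z'.2 := by
  intro k
  induction k using Nat.strong_induction_on with
  | _ k IH =>
    intro z hz hTz hbz
    have hk1 : 1 ≤ k := by
      have := occBefore_pos hfin hz hTz
      omega
    have hbv : k ≤ occBefore α β T v z := by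
      have := hlat z hz hTz
      omega
    obtain ⟨z', hz'c, hz'T, hz'w, hz'b⟩ :=
      exists_kth_occ hfin (occBefore α β T v z) z k rfl hk1 hbv
    have hne : z' ≠ z := by
      intro h; rw [h, hTz] at hz'T; omega
    have hrow : z'.1 < z.1 := by
      rcases hz'w with h | h
      · exact h
      · exfalso
        -- same row, z.2 ≤ z'.2 : row monotone gives T z ≤ T z'
        have hc1 : (z.1, z.2) ∈ cellOf α β := by simpa using hz
        have hc2 : (z.1, z'.2) ∈ cellOf α β := by
          rw [← h.1]; simpa using hz'c
        have := hS.1 z.1 z.2 z'.2 hc1 hc2 h.2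
        simp only [Prod.mk.eta] at this
        have e2 : T (z.1, z'.2) = v := by rw [← h.1]; simpa using hz'T
        rw [hTz] at this
        omega
    refine ⟨z', hz'c, hz'T, hz'b, hrow, ?_⟩
    by_contra hcol
    push_neg at hcol  -- z'.2 < z.2
    have hy : (z'.1, z.2) ∈ cellOf α β :=
      cell_corner hα0 hα hz'c hz (le_of_lt hrow) (le_of_lt hcol)
    have hTy : T (z'.1, z.2) = v := by
      have hge : T (z'.1, z'.2) ≤ T (z'.1, z.2) :=
        hS.1 z'.1 z'.2 z.2 (by simpa using hz'c) hy (le_of_lt hcol)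
      have hlt : T (z'.1, z.2) < T (z.1, z.2) :=
        hS.2 z'.1 z.1 z.2 hy (by simpa using hz) hrow
      have e1 : T (z'.1, z'.2) = v := by simpa using hz'T
      have e2 : T (z.1, z.2) = v + 1 := by simpa using hTz
      omega
    set y : ℕ × ℕ := (z'.1, z.2) with hydef
    have hywle : wle y z' := Or.inr ⟨rfl, le_of_lt hcol⟩
    have hyne : y ≠ z' := by
      intro h
      have : y.2 = z'.2 := by rw [h]
      simp only [hydef] at this
      omega
    have hkk : occBefore α β T v y < k := by
      rw [← hz'b]
      exact occBefore_lt hfin hz'c hz'T hywle hyne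
    have hkk1 : 1 ≤ occBefore α β T v y := occBefore_pos hfin hy hTy
    set k'' := occBefore α β T v y with hk''
    obtain ⟨w, hwc, hwT, hww, hwb⟩ :=
      exists_kth_occ hfin k z k'' hbz hkk1 (by omega)
    obtain ⟨z'', hz''c, hz''T, hz''b, hz''r, hz''col⟩ :=
      IH k'' (by omega) w hwc hwT hwb
    have hz''y : z'' = y := occ_unique hfin hz''c hz''T hy hTy (by rw [hz''b])
    have hwz : w ≠ z := by
      intro h; rw [h, hbz] at hwb; omega
    have hcolwz : z.2 < w.2 :=
      col_strict_occ hα0 hα hS hwc hwT hz hTz hww hwz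
    rw [hz''y] at hz''col
    have : y.2 = z.2 := rfl
    omega

end ClaimX

section Gdom

variable {α β : ℕ → ℕ} {T : ℕ × ℕ → ℕ} {v : ℕ}
variable (hfin : (cellOf α β).Finite)
  (hα0 : α 0 = 0) (hα : ∀ i j, 1 ≤ i → i ≤ j → α j ≤ α i)
  (hS : IsSSkew α β T)
  (hlat : ∀ z ∈ cellOf α β, T z = v + 1 →
    occBefore α β T (v + 1) z ≤ occBefore α β T v z)
include hfin hα0 hα hS hlat

lemma gdom (C : ℕ) : (gSet α β T (v + 1) C).ncard ≤ (gSet α β T v C).ncard := by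
  classical
  set k := (gSet α β T (v + 1) C).ncard with hk
  rcases Nat.eq_zero_or_pos k with h0 | h0
  · omega
  have hfinG : (gSet α β T (v + 1) C).Finite := hfin.subset (fun p hp => hp.1)
  have hne : (gSet α β T (v + 1) C).Nonempty := Set.nonempty_of_ncard_ne_zero (by omega)
  obtain ⟨zm, hzm, hzmax⟩ := exists_wle_max hfinG hne
  have hble : k ≤ occBefore α β T (v + 1) zm := by
    rw [occBefore_def, hk]
    apply Set.ncard_le_ncard _ (occSet_finite hfin _ _)
    intro p hp
    exact ⟨hp.1, hzmax p hp, hp.2.1⟩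
  obtain ⟨z0, hz0c, hz0T, hz0w, hz0b⟩ := exists_kth_occ hfin _ zm k rfl h0 hble
  have hz0col : C ≤ z0.2 := by
    by_contra hcc
    push_neg at hcc
    have hsub : gSet α β T (v + 1) C ⊆ occSet α β T (v + 1) z0 \ {z0} := by
      intro u hu
      have hune : u ≠ z0 := by
        intro h
        rw [h] at hu
        have := hu.2.2
        omega
      have huw : wle u z0 := by
        rcases wle_total u z0 with h | h
        · exact h
        · exfalso
          have := col_strict_occ hα0 hα hS hz0c hz0T hu.1 hu.2.1 h
            (fun he => hune he.symm)
          have := hu.2.2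
          omega
      exact ⟨⟨hu.1, huw, hu.2.1⟩, hune⟩
    have hcard := Set.ncard_le_ncard hsub ((occSet_finite hfin _ _).diff)
    rw [Set.ncard_diff_singleton_of_mem
      (show z0 ∈ occSet α β T (v + 1) z0 from ⟨hz0c, wle_refl z0, hz0T⟩),
      ← occBefore_def, hz0b] at hcard
    omega
  obtain ⟨z', hz'c, hz'T, hz'b, _, hz'col⟩ :=
    claimX hfin hα0 hα hS hlat k z0 hz0c hz0T hz0b
  apply le_ncard_of_exists_kth hfin (hfin.subset (fun p hp => hp.1))
  intro j hj1 hjk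
  obtain ⟨zj, hjc, hjT, hjw, hjb⟩ := exists_kth_occ hfin k z' j hz'b hj1 hjk
  refine ⟨zj, ⟨hjc, hjT, ?_⟩, hjc, hjT, hjb⟩
  have : z'.2 ≤ zj.2 := col_le_of_b_le hfin hα0 hα hS hjc hjT hz'c hz'T (by omega)
  omega

end Gdom
-- ===================== main bridges =====================

section Bridges

variable {m n : ℕ} {la μ ν : ℕ → ℕ} {T Tm : ℕ × ℕ → ℕ}

/-- restriction of semistandardness -/
lemma ssyt_restrict (hla : IsPartition la)
    (hS : IsSSkew (conjP la) (conjP μ) T) :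
    IsSSkew (conjP (lamPlus m la)) (conjP μ) T := by
  constructor
  · intro i j j' h1 h2 h3
    exact hS.1 i j j' (cellP_sub hla h1) (cellP_sub hla h2) h3
  · intro i i' j h1 h2 h3
    exact hS.2 i i' j (cellP_sub hla h1) (cellP_sub hla h2) h3

/-- extension of semistandardness using the row bound -/
lemma ssyt_extend (hla : IsPartition la)
    (hcanon : ∀ p ∈ cellOf (conjP la) (conjP μ), m < p.2 → T p = m + p.1)
    (hS : IsSSkew (conjP (lamPlus m la)) (conjP μ) T)
    (hRB : ∀ p ∈ cellOf (conjP (lamPlus m la)) (conjP μ), T p ≤ m + p.1) :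
    IsSSkew (conjP la) (conjP μ) T := by
  constructor
  · intro i j j' hij hij' hjj
    by_cases hj'm : j' ≤ m
    · have hjm : j ≤ m := le_trans hjj hj'm
      refine hS.1 i j j' ?_ ?_ hjj
      · rw [cellP_eq hla]; exact ⟨hij, hjm⟩
      · rw [cellP_eq hla]; exact ⟨hij', hj'm⟩
    · push_neg at hj'm
      have hcan' : T (i, j') = m + i := hcanon (i, j') hij' hj'm
      by_cases hjm : j ≤ m
      · have hb : T (i, j) ≤ m + i :=
          hRB (i, j) (by rw [cellP_eq hla]; exact ⟨hij, hjm⟩)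
        omega
      · push_neg at hjm
        rw [hcan', hcanon (i, j) hij hjm]
  · intro i i' j hij hi'j hii
    by_cases hjm : j ≤ m
    · refine hS.2 i i' j ?_ ?_ hii
      · rw [cellP_eq hla]; exact ⟨hij, hjm⟩
      · rw [cellP_eq hla]; exact ⟨hi'j, hjm⟩
    · push_neg at hjm
      rw [hcanon (i, j) hij hjm, hcanon (i', j) hi'j hjm]
      omega

/-- prefix-count comparison for full row prefixes, from the shifted Yamanouchi property -/
lemma F_sy (hla : IsPartition la)
    (hSY : ShiftedYam (conjP (lamPlus m la)) (conjP μ) m (lamMinus m la) T)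
    (r : ℕ) {i : ℕ} (hi : 1 ≤ i) :
    lamMinus m la (i + 1) + Fcnt (conjP (lamPlus m la)) (conjP μ) T r (m + i + 1)
      ≤ lamMinus m la i + Fcnt (conjP (lamPlus m la)) (conjP μ) T r (m + i) := by
  have hfinP : (cellOf (conjP (lamPlus m la)) (conjP μ)).Finite := cellP_fin hla
  have hωmono := lamMinus_antitone (m := m) hla hi (show i ≤ i + 1 by omega)
  set W := {p | p ∈ cellOf (conjP (lamPlus m la)) (conjP μ) ∧ p.1 ≤ r ∧ T p = m + i + 1}
    with hW
  rcases Set.eq_empty_or_nonempty W with hemp | hne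
  · have h0 : Fcnt (conjP (lamPlus m la)) (conjP μ) T r (m + i + 1) = 0 := by
      rw [show Fcnt (conjP (lamPlus m la)) (conjP μ) T r (m + i + 1) = W.ncard from rfl,
        hemp, Set.ncard_empty]
    omega
  · obtain ⟨z, hz, hzmax⟩ := exists_wle_max (hfinP.subset (fun p hp => hp.1)) hne
    have hocc1 : occBefore (conjP (lamPlus m la)) (conjP μ) T (m + i + 1) z
        = Fcnt (conjP (lamPlus m la)) (conjP μ) T r (m + i + 1) := by
      rw [occBefore_def,
        show Fcnt (conjP (lamPlus m la)) (conjP μ) T r (m + i + 1) = W.ncard from rfl]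
      congr 1
      apply Set.eq_of_subset_of_subset
      · intro u hu
        refine ⟨hu.1, ?_, hu.2.2⟩
        have h1 : u.1 ≤ z.1 := by
          rcases hu.2.1 with h | h
          · omega
          · omega
        exact le_trans h1 hz.2.1
      · intro u hu
        exact ⟨hu.1, hzmax u hu, hu.2.2⟩
    have hocc2 : occBefore (conjP (lamPlus m la)) (conjP μ) T (m + i) z
        ≤ Fcnt (conjP (lamPlus m la)) (conjP μ) T r (m + i) := by
      rw [occBefore_def,
        show Fcnt (conjP (lamPlus m la)) (conjP μ) T r (m + i)
          = Set.ncard {p | p ∈ cellOf (conjP (lamPlus m la)) (conjP μ) ∧ p.1 ≤ r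
            ∧ T p = m + i} from rfl]
      apply Set.ncard_le_ncard _ (hfinP.subset (fun p hp => hp.1))
      intro u hu
      refine ⟨hu.1, ?_, hu.2.2⟩
      have h1 : u.1 ≤ z.1 := by
        rcases hu.2.1 with h | h
        · omega
        · omega
      exact le_trans h1 hz.2.1
    have := hSY z hz.1 i hi
    omega

/-- latticeness of the big tableau from shifted Yamanouchi + row bound -/
lemma lattice_of_sy (hla : IsPartition la) (hμ : IsPartition μ)
    (hμl : ∀ i, μ i ≤ lamPlus m la i) (hm : 1 ≤ m) (hlam : n ≤ la m)
    (hrange : ∀ p ∈ cellOf (conjP la) (conjP μ), m + 1 ≤ T p ∧ T p ≤ m + n)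
    (hcanon : ∀ p ∈ cellOf (conjP la) (conjP μ), m < p.2 → T p = m + p.1)
    (hSp : IsSSkew (conjP (lamPlus m la)) (conjP μ) T)
    (hSY : ShiftedYam (conjP (lamPlus m la)) (conjP μ) m (lamMinus m la) T) :
    IsLatticeFrom (conjP la) (conjP μ) T (m + 1) := by
  have hRB := rowBound hla hμ hm hlam hrange hSp
  have hfinP : (cellOf (conjP (lamPlus m la)) (conjP μ)).Finite := cellP_fin hla
  intro x hx v hv
  obtain ⟨i, rfl⟩ : ∃ i, v = m + i := ⟨v - m, by omega⟩
  have hi : 1 ≤ i := by omega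
  have hsucc : m + i + 1 = m + (i + 1) := by omega
  by_cases hxm : x.2 ≤ m
  · have hxP : x ∈ cellOf (conjP (lamPlus m la)) (conjP μ) := by
      rw [cellP_eq hla]; exact ⟨hx, hxm⟩
    rw [hsucc, occB_split hla hμl hcanon (show 1 ≤ i + 1 by omega) hxP,
      occB_split hla hμl hcanon hi hxP]
    by_cases hcase : i + 1 ≤ x.1
    · rw [if_pos hcase, if_pos (show i ≤ x.1 by omega)]
      have := hSY x hxP i hi
      rw [hsucc] at this
      omega
    · rw [if_neg hcase]
      have hzero : occBefore (conjP (lamPlus m la)) (conjP μ) T (m + (i + 1)) x = 0 := by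
        rw [occBefore_def]
        convert Set.ncard_empty (ℕ × ℕ)
        rw [Set.eq_empty_iff_forall_notMem]
        rintro p ⟨hpP, hpw, hpT⟩
        have h1 : T p ≤ m + p.1 := hRB p hpP
        have h2 : p.1 ≤ x.1 := by
          rcases hpw with h | h
          · omega
          · omega
        omega
      rw [hzero]
      omega
  · push_neg at hxm
    rw [hsucc, occB_canon hla hμl hcanon (show 1 ≤ i + 1 by omega) hx hxm,
      occB_canon hla hμl hcanon hi hx hxm,
      show m + (i + 1) = m + i + 1 from rfl]
    have hx1 : 1 ≤ x.1 := cell_row_pos (conjP_zero la) hx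
    have hF0 : ∀ i', x.1 ≤ i' →
        Fcnt (conjP (lamPlus m la)) (conjP μ) T (x.1 - 1) (m + i') = 0 := by
      intro i' hi'
      rw [show Fcnt (conjP (lamPlus m la)) (conjP μ) T (x.1 - 1) (m + i')
        = Set.ncard {p | p ∈ cellOf (conjP (lamPlus m la)) (conjP μ) ∧ p.1 ≤ x.1 - 1
          ∧ T p = m + i'} from rfl]
      convert Set.ncard_empty (ℕ × ℕ)
      rw [Set.eq_empty_iff_forall_notMem]
      rintro p ⟨hpP, hpr, hpT⟩
      have h1 : T p ≤ m + p.1 := hRB p hpP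
      omega
    rcases lt_trichotomy (i + 1) x.1 with hc | hc | hc
    · rw [if_pos hc, if_pos (show i < x.1 by omega)]
      have := F_sy hla hSY (x.1 - 1) hi
      omega
    · rw [if_neg (by omega), if_pos hc, if_pos (show i < x.1 by omega)]
      have h0 : Fcnt (conjP (lamPlus m la)) (conjP μ) T (x.1 - 1) (m + (i + 1)) = 0 :=
        hF0 (i + 1) (by omega)
      rw [show m + i + 1 = m + (i + 1) from rfl, h0]
      have hω1 : lamMinus m la x.1 = conjP la x.1 - m := lamMinus_eq hla (by omega)
      have hω2 : lamMinus m la x.1 ≤ lamMinus m la i :=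
        lamMinus_antitone hla hi (by omega)
      have hx2 : x.2 ≤ conjP la x.1 := hx.2
      omega
    · rw [if_neg (by omega), if_neg (by omega)]
      have h0 : Fcnt (conjP (lamPlus m la)) (conjP μ) T (x.1 - 1) (m + (i + 1)) = 0 :=
        hF0 (i + 1) (by omega)
      rw [show m + i + 1 = m + (i + 1) from rfl, h0]
      omega

end Bridges
-- ===================== anti ⟹ shifted Yamanouchi =====================

section Part7

variable {m n : ℕ} {la μ ν : ℕ → ℕ} {T Tm : ℕ × ℕ → ℕ}

lemma sy_of_anti (hla : IsPartition la) (hμ : IsPartition μ)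
    (hν : IsPartition ν) (hνω : ∀ i, lamMinus m la i ≤ ν i)
    (hcontp : ∀ i, 1 ≤ i →
      occCount (conjP (lamPlus m la)) (conjP μ) T (m + i) = ν i - lamMinus m la i)
    (hRp : IsRp (conjP (lamPlus m la)) (conjP μ) m (lamMinus m la) T Tm)
    (hSp : IsSSkew (conjP (lamPlus m la)) (conjP μ) T)
    (hAnti : ∀ i i' j, (i, j) ∈ cellOf ν (lamMinus m la) →
      (i', j) ∈ cellOf ν (lamMinus m la) → i ≤ i' → Tm (i', j) ≤ Tm (i, j)) :
    ShiftedYam (conjP (lamPlus m la)) (conjP μ) m (lamMinus m la) T := by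
  have hfinP : (cellOf (conjP (lamPlus m la)) (conjP μ)).Finite := cellP_fin hla
  have hαP0 : conjP (lamPlus m la) 0 = 0 := conjP_zero _
  have hαPmono : ∀ i j, 1 ≤ i → i ≤ j → conjP (lamPlus m la) j ≤ conjP (lamPlus m la) i :=
    fun i j hi hij => conjP_antitone (isPartition_lamPlus hla) hi hij
  intro x hxP i hi
  set t := occBefore (conjP (lamPlus m la)) (conjP μ) T (m + i + 1) x with ht
  have hωmono := lamMinus_antitone (m := m) hla hi (show i ≤ i + 1 by omega)
  rcases Nat.eq_zero_or_pos t with h0 | h0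
  · omega
  by_cases hcase : lamMinus m la (i + 1) + t ≤ lamMinus m la i
  · omega
  push_neg at hcase
  obtain ⟨z, hzP, hzT, hzw, hzb⟩ := exists_kth_occ hfinP t x t rfl h0 le_rfl
  set j := lamMinus m la (i + 1) + t with hj
  set k' := j - lamMinus m la i with hk'
  have hk'1 : 1 ≤ k' := by omega
  have htf : t ≤ ν (i + 1) - lamMinus m la (i + 1) := by
    rw [← hcontp (i + 1) (by omega)]
    rw [ht]
    exact occBefore_le_count hfinP (m + i + 1) x
  have hν1 := hνω (i + 1)
  have hν0 := hνω i
  have hj2 : j ≤ ν (i + 1) := by omega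
  have hji : j ≤ ν i := le_trans hj2 (hν.2.1 i (i + 1) hi (by omega))
  have hk'f : k' ≤ ν i - lamMinus m la i := by omega
  obtain ⟨z', hz'P, hz'T, hz'b⟩ := exists_global_kth hfinP hk'1
    (by rw [hcontp i hi]; exact hk'f)
  -- Tm evaluations
  have hTm1 : Tm (i + 1, lamMinus m la (i + 1) + t) = z.2 := by
    have h := hRp z hzP (i + 1) (by omega) hzT
    have hb' : occBefore (conjP (lamPlus m la)) (conjP μ) T (m + (i + 1)) z = t := hzb
    rw [hb'] at h
    exact h
  have hTm2 : Tm (i, j) = z'.2 := by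
    have h := hRp z' hz'P i hi hz'T
    rw [hz'b] at h
    rw [show j = lamMinus m la i + k' by omega]
    exact h
  have hanti := hAnti i (i + 1) j
    (show (i, j) ∈ cellOf ν (lamMinus m la) from ⟨by simpa using hcase, by simpa using hji⟩)
    (show (i + 1, j) ∈ cellOf ν (lamMinus m la) from ⟨by simp only; omega, by simpa using hj2⟩)
    (by omega)
  rw [hTm2] at hanti
  rw [show (lamMinus m la (i + 1) + t) = j from rfl] at hTm1
  rw [hTm1] at hanti
  -- hanti : z.2 ≤ z'.2
  have hwz : wle z' z := by
    rcases wle_total z' z with h | h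
    · exact h
    · -- wle z z'
      have hne : z ≠ z' := by
        intro he; rw [he, hz'T] at hzT; omega
      rcases h with hlt | hsame
      · -- z.1 < z'.1 : corner contradiction
        exfalso
        have hy : (z.1, z'.2) ∈ cellOf (conjP (lamPlus m la)) (conjP μ) :=
          cell_corner hαP0 hαPmono hzP hz'P (le_of_lt hlt) hanti
        have hge : T (z.1, z.2) ≤ T (z.1, z'.2) :=
          hSp.1 z.1 z.2 z'.2 (by simpa using hzP) hy hanti
        have hlt2 : T (z.1, z'.2) < T (z'.1, z'.2) :=
          hSp.2 z.1 z'.1 z'.2 hy (by simpa using hz'P) hlt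
        have e1 : T (z.1, z.2) = m + i + 1 := by simpa using hzT
        have e2 : T (z'.1, z'.2) = m + i := by simpa using hz'T
        omega
      · -- same row
        exfalso
        have : z = z' := by
          apply Prod.ext
          · exact hsame.1
          · omega
        exact hne this
  have h1 : k' ≤ occBefore (conjP (lamPlus m la)) (conjP μ) T (m + i) z := by
    rw [← hz'b]
    exact occBefore_mono hfinP hwz (m + i)
  have h2 : occBefore (conjP (lamPlus m la)) (conjP μ) T (m + i) z
      ≤ occBefore (conjP (lamPlus m la)) (conjP μ) T (m + i) x :=
    occBefore_mono hfinP hzw (m + i)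
  omega

/-- split of the column-restricted counts between big and plus shapes -/
lemma gSet_split (hla : IsPartition la) (hμl : ∀ i, μ i ≤ lamPlus m la i)
    (hcanon : ∀ p ∈ cellOf (conjP la) (conjP μ), m < p.2 → T p = m + p.1)
    {i C : ℕ} (hi : 1 ≤ i) (hC : C ≤ m + 1) :
    (gSet (conjP la) (conjP μ) T (m + i) C).ncard
      = (gSet (conjP (lamPlus m la)) (conjP μ) T (m + i) C).ncard + lamMinus m la i := by
  have hfinB := cellB_fin (μ := μ) hla
  have hQ : {p | p ∈ gSet (conjP la) (conjP μ) T (m + i) C ∧ p.2 ≤ m}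
      = gSet (conjP (lamPlus m la)) (conjP μ) T (m + i) C := by
    ext p
    simp only [Set.mem_setOf_eq, gSet, cellP_eq hla]
    tauto
  have hCan : {p | p ∈ gSet (conjP la) (conjP μ) T (m + i) C ∧ m < p.2}
      = {p : ℕ × ℕ | p.1 = i ∧ m < p.2 ∧ p.2 ≤ conjP la i} := by
    ext p
    constructor
    · rintro ⟨⟨hpB, hpT, hpC⟩, hpm⟩
      have hcan := hcanon p hpB hpm
      have hp1 : p.1 = i := by omega
      exact ⟨hp1, hpm, by rw [← hp1]; exact hpB.2⟩
    · rintro ⟨hp1, hp2, hp3⟩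
      have hpB : p ∈ cellOf (conjP la) (conjP μ) := by
        refine ⟨?_, by rw [hp1]; exact hp3⟩
        have := beta_le_m (la := la) hμl (show 1 ≤ p.1 by omega)
        omega
      exact ⟨⟨hpB, by rw [hcanon p hpB hp2, hp1], by omega⟩, hp2⟩
  have hunion : gSet (conjP la) (conjP μ) T (m + i) C
      = {p | p ∈ gSet (conjP la) (conjP μ) T (m + i) C ∧ p.2 ≤ m}
        ∪ {p | p ∈ gSet (conjP la) (conjP μ) T (m + i) C ∧ m < p.2} := by
    ext p
    simp only [Set.mem_union, Set.mem_setOf_eq]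
    rcases le_or_gt p.2 m with h | h
    · tauto
    · tauto
  have hdisj : Disjoint {p | p ∈ gSet (conjP la) (conjP μ) T (m + i) C ∧ p.2 ≤ m}
      {p | p ∈ gSet (conjP la) (conjP μ) T (m + i) C ∧ m < p.2} := by
    rw [Set.disjoint_left]
    intro p hp1 hp2
    have h1 := hp1.2
    have h2 := hp2.2
    omega
  have hfing : (gSet (conjP la) (conjP μ) T (m + i) C).Finite :=
    hfinB.subset (fun p hp => hp.1)
  rw [hunion, Set.ncard_union_eq hdisj (hfing.subset (fun p hp => hp.1))
    (hfing.subset (fun p hp => hp.1))]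
  rw [hQ, hCan, ncard_rowseg, lamMinus_eq hla hi]

end Part7
-- ===================== LR ⟹ anti =====================

section Part8

variable {m n : ℕ} {la μ ν : ℕ → ℕ} {T Tm : ℕ × ℕ → ℕ}

lemma anti_of_lr (hla : IsPartition la) (hμl : ∀ i, μ i ≤ lamPlus m la i)
    (hν : IsPartition ν) (hνω : ∀ i, lamMinus m la i ≤ ν i)
    (hcontp : ∀ i, 1 ≤ i →
      occCount (conjP (lamPlus m la)) (conjP μ) T (m + i) = ν i - lamMinus m la i)
    (hRp : IsRp (conjP (lamPlus m la)) (conjP μ) m (lamMinus m la) T Tm)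
    (hcanon : ∀ p ∈ cellOf (conjP la) (conjP μ), m < p.2 → T p = m + p.1)
    (hSb : IsSSkew (conjP la) (conjP μ) T)
    (hlat : IsLatticeFrom (conjP la) (conjP μ) T (m + 1)) :
    IsAntiSSkew ν (lamMinus m la) Tm := by
  have hSp := ssyt_restrict (m := m) hla hSb
  have hfinB := cellB_fin (μ := μ) hla
  have hfinP : (cellOf (conjP (lamPlus m la)) (conjP μ)).Finite := cellP_fin hla
  have hαP0 : conjP (lamPlus m la) 0 = 0 := conjP_zero _
  have hαPmono : ∀ i j, 1 ≤ i → i ≤ j → conjP (lamPlus m la) j ≤ conjP (lamPlus m la) i :=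
    fun i j hi hij => conjP_antitone (isPartition_lamPlus hla) hi hij
  have hαB0 : conjP la 0 = 0 := conjP_zero la
  have hαBmono : ∀ i j, 1 ≤ i → i ≤ j → conjP la j ≤ conjP la i :=
    fun i j hi hij => conjP_antitone hla hi hij
  constructor
  · -- rows of Tm strictly decrease
    intro i j j' hm1 hm2 hjj'
    have hi : 1 ≤ i := cell_row_pos hν.1 hm1
    have e1 : lamMinus m la i < j := hm1.1
    have e2 : j ≤ ν i := hm1.2
    have e3 : lamMinus m la i < j' := hm2.1
    have e4 : j' ≤ ν i := hm2.2
    set k := j - lamMinus m la i with hk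
    set k' := j' - lamMinus m la i with hk'
    have hνi := hνω i
    obtain ⟨zk, hzkP, hzkT, hzkb⟩ := exists_global_kth hfinP (show 1 ≤ k by omega)
      (by rw [hcontp i hi]; omega)
    obtain ⟨zk', hzk'P, hzk'T, hzk'b⟩ := exists_global_kth hfinP (show 1 ≤ k' by omega)
      (by rw [hcontp i hi]; omega)
    have hTm1 : Tm (i, j) = zk.2 := by
      have h := hRp zk hzkP i hi hzkT
      rw [hzkb] at h
      rw [show j = lamMinus m la i + k by omega]
      exact h
    have hTm2 : Tm (i, j') = zk'.2 := by
      have h := hRp zk' hzk'P i hi hzk'T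
      rw [hzk'b] at h
      rw [show j' = lamMinus m la i + k' by omega]
      exact h
    have hne : zk ≠ zk' := by
      intro he
      rw [he, hzk'b] at hzkb
      omega
    have hwle : wle zk zk' := by
      rcases wle_total zk zk' with h | h
      · exact h
      · exfalso
        have := occBefore_lt hfinP hzkP hzkT h (fun he => hne he.symm)
        omega
    have := col_strict_occ hαP0 hαPmono hSp hzkP hzkT hzk'P hzk'T hwle hne
    omega
  · -- columns of Tm weakly decrease
    have hlat' : ∀ i, 1 ≤ i → ∀ z ∈ cellOf (conjP la) (conjP μ), T z = (m + i) + 1 →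
        occBefore (conjP la) (conjP μ) T ((m + i) + 1) z
          ≤ occBefore (conjP la) (conjP μ) T (m + i) z := by
      intro i hi z hz _
      exact hlat z hz (m + i) (by omega)
    have key_adj : ∀ i j, (i, j) ∈ cellOf ν (lamMinus m la) →
        (i + 1, j) ∈ cellOf ν (lamMinus m la) → Tm (i + 1, j) ≤ Tm (i, j) := by
      intro i j hm1 hm2
      have hi : 1 ≤ i := cell_row_pos hν.1 hm1
      have e1 : lamMinus m la i < j := hm1.1
      have e2 : j ≤ ν i := hm1.2
      have e3 : lamMinus m la (i + 1) < j := hm2.1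
      have e4 : j ≤ ν (i + 1) := hm2.2
      have hνi := hνω i
      have hνi1 := hνω (i + 1)
      set t := j - lamMinus m la (i + 1) with htdef
      set k' := j - lamMinus m la i with hk'def
      obtain ⟨z, hzP, hzT, hzb⟩ := exists_global_kth hfinP (v := m + (i + 1))
        (show 1 ≤ t by omega) (by rw [hcontp (i + 1) (by omega)]; omega)
      obtain ⟨z', hz'P, hz'T, hz'b⟩ := exists_global_kth hfinP (v := m + i)
        (show 1 ≤ k' by omega) (by rw [hcontp i hi]; omega)
      have hTm1 : Tm (i + 1, j) = z.2 := by
        have h := hRp z hzP (i + 1) (by omega) hzT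
        rw [hzb] at h
        rw [show j = lamMinus m la (i + 1) + t by omega]
        exact h
      have hTm2 : Tm (i, j) = z'.2 := by
        have h := hRp z' hz'P i hi hz'T
        rw [hz'b] at h
        rw [show j = lamMinus m la i + k' by omega]
        exact h
      rw [hTm1, hTm2]
      -- goal : z.2 ≤ z'.2
      have hz'm : z'.2 ≤ m := by
        have h := hz'P
        rw [cellP_eq hla] at h
        exact h.2
      set C := z'.2 + 1 with hCdef
      have hgd := gdom hfinB hαB0 hαBmono hSb (hlat' i hi) C
      rw [show (m + i) + 1 = m + (i + 1) from rfl] at hgd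
      have hsplit1 := gSet_split (T := T) hla hμl hcanon (show 1 ≤ i + 1 by omega)
        (show C ≤ m + 1 by omega)
      have hsplit2 := gSet_split (T := T) hla hμl hcanon hi
        (show C ≤ m + 1 by omega)
      have hg1 : (gSet (conjP (lamPlus m la)) (conjP μ) T (m + i) C).ncard ≤ k' - 1 := by
        apply ncard_le_of_b_between hfinP
        intro u hu
        have hune : u ≠ z' := by
          intro he
          have := hu.2.2
          rw [he] at this
          omega
        have hwle : wle u z' := by
          rcases wle_total u z' with h | h
          · exact h
          · exfalso
            have := col_strict_occ hαP0 hαPmono hSp hz'P hz'T hu.1 hu.2.1 h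
              (fun he => hune he.symm)
            have h2 := hu.2.2
            omega
        have hblt := occBefore_lt hfinP hz'P hz'T hwle hune
        rw [hz'b] at hblt
        exact ⟨hu.1, hu.2.1, occBefore_pos hfinP hu.1 hu.2.1, by omega⟩
      have hg2 : (gSet (conjP (lamPlus m la)) (conjP μ) T (m + (i + 1)) C).ncard ≤ t - 1 := by
        omega
      by_contra hcc
      push_neg at hcc
      -- hcc : z'.2 < z.2, so C ≤ z.2
      have hle : t ≤ (gSet (conjP (lamPlus m la)) (conjP μ) T (m + (i + 1)) C).ncard := by
        apply le_ncard_of_exists_kth hfinP (hfinP.subset (fun p hp => hp.1))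
        intro j' hj'1 hj't
        obtain ⟨zj, hjc, hjT, hjw, hjb⟩ := exists_kth_occ hfinP t z j' hzb hj'1 hj't
        refine ⟨zj, ⟨hjc, hjT, ?_⟩, hjc, hjT, hjb⟩
        have : z.2 ≤ zj.2 := col_le_of_b_le hfinP hαP0 hαPmono hSp hjc hjT hzP hzT
          (by omega)
        omega
      omega
    have key : ∀ d i j, (i, j) ∈ cellOf ν (lamMinus m la) →
        (i + d, j) ∈ cellOf ν (lamMinus m la) → Tm (i + d, j) ≤ Tm (i, j) := by
      intro d
      induction d with
      | zero => intro i j h1 h2; simp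
      | succ d ih =>
        intro i j h1 h2
        have hi : 1 ≤ i := cell_row_pos hν.1 h1
        have hmid : (i + d, j) ∈ cellOf ν (lamMinus m la) := by
          have e1 : lamMinus m la i < j := h1.1
          have e5 : j ≤ ν (i + d + 1) := h2.2
          have hω : lamMinus m la (i + d) ≤ lamMinus m la i :=
            lamMinus_antitone hla hi (by omega)
          have hνm : ν (i + d + 1) ≤ ν (i + d) := hν.2.1 (i + d) (i + d + 1) (by omega)
            (by omega)
          exact ⟨by simp only; omega, by simp only; omega⟩
        have h3 := key_adj (i + d) j hmid (by
          rw [show (i + d) + 1 = i + (d + 1) from rfl]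
          exact h2)
        have h4 := ih i j h1 hmid
        rw [show i + (d + 1) = (i + d) + 1 from rfl]
        omega
    intro i i' j h1 h2 hii
    obtain ⟨d, rfl⟩ : ∃ d, i' = i + d := ⟨i' - i, by omega⟩
    exact key d i j h1 h2

end Part8
/-- assume `λ⁺_m ≥ n`. Then `T` is a Littlewood–Richardson tableau
(semistandard with lattice reading word) if and only if `T⁺` is marked (`T⁺`
semistandard and `Rp(T⁺)` anti-semistandard). -/
theorem statement15 (m n : ℕ) (hm : 1 ≤ m) (hn : 1 ≤ n) (la μ ν : ℕ → ℕ)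
    (hla : IsPartition la) (hook : la (m + 1) ≤ n)
    (hμ : IsPartition μ) (hμl : ∀ i, μ i ≤ lamPlus m la i)
    (hν : IsPartition ν) (hνω : ∀ i, lamMinus m la i ≤ ν i)
    (hlam : n ≤ la m)
    (T : ℕ × ℕ → ℕ)
    (hrange : ∀ p ∈ cellOf (conjP la) (conjP μ), m + 1 ≤ T p ∧ T p ≤ m + n)
    (hcanon : ∀ p ∈ cellOf (conjP la) (conjP μ), m < p.2 → T p = m + p.1)
    (hcont : ∀ i, 1 ≤ i → occCount (conjP la) (conjP μ) T (m + i) = ν i)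
    (hcontp : ∀ i, 1 ≤ i →
      occCount (conjP (lamPlus m la)) (conjP μ) T (m + i) = ν i - lamMinus m la i)
    (Tm : ℕ × ℕ → ℕ)
    (hRp : IsRp (conjP (lamPlus m la)) (conjP μ) m (lamMinus m la) T Tm) :
    (IsSSkew (conjP la) (conjP μ) T ∧ IsLatticeFrom (conjP la) (conjP μ) T (m + 1)) ↔
      (IsSSkew (conjP (lamPlus m la)) (conjP μ) T ∧ IsAntiSSkew ν (lamMinus m la) Tm) := by
  constructor
  · rintro ⟨hSb, hlat⟩
    exact ⟨ssyt_restrict (m := m) hla hSb,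
      anti_of_lr hla hμl hν hνω hcontp hRp hcanon hSb hlat⟩
  · rintro ⟨hSp, hAnti⟩
    have hRB := rowBound hla hμ hm hlam hrange hSp
    have hSY := sy_of_anti hla hμ hν hνω hcontp hRp hSp hAnti.2
    exact ⟨ssyt_extend hla hcanon hSp hRB,
      lattice_of_sy hla hμ hμl hm hlam hrange hcanon hSp hSY⟩
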